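/- arXiv:1512.09362 — 4 statements merged into one kernel-verified Lean document; each statement's English description precedes it below -/
import Mathlib

section
/- Let 𝕜 be a complete nontrivially normed field, s ∈ 𝕜, and let g₁, g₂ and the four entries M i j (i, j ∈ {0,1}) of a 2×2 matrix of functions 𝕜 → 𝕜 all be analytic at s. Suppose f_j(z) = g₁(z)·M 0 j (z) + g₂(z)·M 1 j (z) (j = 0, 1) holds for all z in some neighborhood of s, and that M 0 0 (s)·M 1 1 (s) − M 0 1 (s)·M 1 0 (s) ≠ 0. Then for every m ∈ ℕ: (for all k ≤ m, the k-th iterated derivative of f₀ at s and of f₁ at s are both 0) if and only if (for all k ≤ m, the k-th iterated derivative of g₁ at s and of g₂ at s are both 0). -/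
open Filter Topology

section AuxHelpers

variable {𝕜 : Type*} [NontriviallyNormedField 𝕜] [CompleteSpace 𝕜]

lemma aux_analyticAt_deriv {f : 𝕜 → 𝕜} {x : 𝕜} (hf : AnalyticAt 𝕜 f x) :
    AnalyticAt 𝕜 (deriv f) x := by
  obtain ⟨U, hUsub, hUopen, hxU⟩ := mem_nhds_iff.mp hf.eventually_analyticAt
  exact (AnalyticOnNhd.deriv (fun y hy => hUsub hy)) x hxU

lemma aux_iteratedDeriv_add {n : ℕ} {f g : 𝕜 → 𝕜} {x : 𝕜} (hf : AnalyticAt 𝕜 f x)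
    (hg : AnalyticAt 𝕜 g x) :
    iteratedDeriv n (fun z => f z + g z) x = iteratedDeriv n f x + iteratedDeriv n g x := by
  obtain ⟨U, hUsub, hUopen, hxU⟩ := mem_nhds_iff.mp
    (hf.eventually_analyticAt.and hg.eventually_analyticAt)
  have e : ∀ h : 𝕜 → 𝕜, iteratedDeriv n h x = iteratedDerivWithin n h U x := fun h => by
    rw [iteratedDeriv, iteratedDerivWithin, iteratedFDerivWithin_of_isOpen n hUopen hxU]
  have hfc : ContDiffOn 𝕜 n f U :=
    (AnalyticOnNhd.contDiffOn (fun y hy => (hUsub hy).1) hUopen.uniqueDiffOn)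
  have hgc : ContDiffOn 𝕜 n g U :=
    (AnalyticOnNhd.contDiffOn (fun y hy => (hUsub hy).2) hUopen.uniqueDiffOn)
  rw [e, e, e]
  exact iteratedDerivWithin_add hxU hUopen.uniqueDiffOn (hfc x hxU) (hgc x hxU)

lemma aux_vanish_mul {x : 𝕜} : ∀ (m : ℕ) {u v : 𝕜 → 𝕜}, AnalyticAt 𝕜 u x → AnalyticAt 𝕜 v x →
    (∀ k ≤ m, iteratedDeriv k u x = 0) →
    ∀ k ≤ m, iteratedDeriv k (fun z => u z * v z) x = 0 := by
  intro m
  induction m with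
  | zero =>
    intro u v hu hv h k hk
    interval_cases k
    have := h 0 le_rfl
    rw [iteratedDeriv_zero] at this ⊢
    simp [this]
  | succ m IH =>
    intro u v hu hv h k hk
    rcases Nat.lt_succ_iff_lt_or_eq.mp (Nat.lt_succ_of_le hk) with hk' | rfl
    · exact IH hu hv (fun k hk => h k (le_of_lt (Nat.lt_succ_of_le hk)))
        k (Nat.lt_succ_iff.mp hk')
    · rw [iteratedDeriv_succ']
      have heq : deriv (fun z => u z * v z) =ᶠ[𝓝 x]
          fun z => deriv u z * v z + u z * deriv v z := by
        filter_upwards [hu.eventually_analyticAt, hv.eventually_analyticAt] with z hz1 hz2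
        exact deriv_mul hz1.differentiableAt hz2.differentiableAt
      rw [heq.iteratedDeriv_eq m,
        aux_iteratedDeriv_add (f := fun z => deriv u z * v z) (g := fun z => u z * deriv v z)
          ((aux_analyticAt_deriv hu).mul hv) (hu.mul (aux_analyticAt_deriv hv)),
        IH (aux_analyticAt_deriv hu) hv
          (fun k hk => by rw [← iteratedDeriv_succ']; exact h (k + 1) (Nat.succ_le_succ hk))
          m le_rfl,
        IH hu (aux_analyticAt_deriv hv) (fun k hk => h k (le_of_lt (Nat.lt_succ_of_le hk)))
          m le_rfl, add_zero]

lemma aux_vanish_sub {x : 𝕜} (m : ℕ) {u v : 𝕜 → 𝕜} (hu : AnalyticAt 𝕜 u x)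
    (hv : AnalyticAt 𝕜 v x) (hu0 : ∀ k ≤ m, iteratedDeriv k u x = 0)
    (hv0 : ∀ k ≤ m, iteratedDeriv k v x = 0) :
    ∀ k ≤ m, iteratedDeriv k (fun z => u z - v z) x = 0 := by
  intro k hk
  have : (fun z => u z - v z) = fun z => u z + v z * (-1) := by funext z; ring
  rw [this, aux_iteratedDeriv_add (g := fun z => v z * (-1)) hu (hv.mul analyticAt_const), hu0 k hk,
    aux_vanish_mul m hv analyticAt_const hv0 k hk, add_zero]

end AuxHelpers


/-- Key calculus step in the proof of Lemma 5.2: simultaneous vanishing of all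
Taylor coefficients up to order `m` is preserved when a row vector of analytic
functions is multiplied by a 2×2 matrix of analytic functions whose determinant
does not vanish at the point. -/
theorem iteratedDeriv_vanish_iff_of_matrix_rel
    {𝕜 : Type*} [NontriviallyNormedField 𝕜] [CompleteSpace 𝕜]
    {s : 𝕜} {g₁ g₂ : 𝕜 → 𝕜} {M : Fin 2 → Fin 2 → 𝕜 → 𝕜} {f : Fin 2 → 𝕜 → 𝕜}
    (hg₁ : AnalyticAt 𝕜 g₁ s) (hg₂ : AnalyticAt 𝕜 g₂ s)
    (hM : ∀ i j, AnalyticAt 𝕜 (M i j) s)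
    (hrel : ∀ᶠ z in 𝓝 s, ∀ j, f j z = g₁ z * M 0 j z + g₂ z * M 1 j z)
    (hdet : M 0 0 s * M 1 1 s - M 0 1 s * M 1 0 s ≠ 0) :
    ∀ m : ℕ,
      ((∀ k ≤ m, iteratedDeriv k (f 0) s = 0 ∧ iteratedDeriv k (f 1) s = 0) ↔
        (∀ k ≤ m, iteratedDeriv k g₁ s = 0 ∧ iteratedDeriv k g₂ s = 0)) := by

  intro m
  set det : 𝕜 → 𝕜 := fun z => M 0 0 z * M 1 1 z - M 0 1 z * M 1 0 z with hdetdef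
  have hdetA : AnalyticAt 𝕜 det s := ((hM 0 0).mul (hM 1 1)).sub ((hM 0 1).mul (hM 1 0))
  have hdets : det s ≠ 0 := hdet
  have hdinvA : AnalyticAt 𝕜 (fun z => (det z)⁻¹) s := hdetA.inv hdets
  have hfA : ∀ j, AnalyticAt 𝕜 (f j) s := fun j =>
    (((hg₁.mul (hM 0 j)).add (hg₂.mul (hM 1 j))).congr (hrel.mono fun z hz => (hz j).symm))
  have hdne : ∀ᶠ z in 𝓝 s, det z ≠ 0 := hdetA.continuousAt.eventually_ne hdets
  constructor
  · intro hf k hk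
    have hv0 : ∀ j, ∀ k ≤ m, iteratedDeriv k (f j) s = 0 := by
      intro j k hk
      fin_cases j
      · exact (hf k hk).1
      · exact (hf k hk).2
    -- g₁ = (f 0 * M 1 1 - f 1 * M 1 0) * det⁻¹ near s
    have e1 : g₁ =ᶠ[𝓝 s] fun z => (f 0 z * M 1 1 z - f 1 z * M 1 0 z) * (det z)⁻¹ := by
      filter_upwards [hrel, hdne] with z hz hz2
      rw [hz 0, hz 1]
      field_simp
      ring
    have e2 : g₂ =ᶠ[𝓝 s] fun z => (f 1 z * M 0 0 z - f 0 z * M 0 1 z) * (det z)⁻¹ := by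
      filter_upwards [hrel, hdne] with z hz hz2
      rw [hz 0, hz 1]
      field_simp
      ring
    constructor
    · rw [e1.iteratedDeriv_eq k]
      exact aux_vanish_mul m
        (((hfA 0).mul (hM 1 1)).sub ((hfA 1).mul (hM 1 0))) hdinvA
        (aux_vanish_sub m ((hfA 0).mul (hM 1 1)) ((hfA 1).mul (hM 1 0))
          (aux_vanish_mul m (hfA 0) (hM 1 1) (hv0 0))
          (aux_vanish_mul m (hfA 1) (hM 1 0) (hv0 1))) k hk
    · rw [e2.iteratedDeriv_eq k]
      exact aux_vanish_mul m
        (((hfA 1).mul (hM 0 0)).sub ((hfA 0).mul (hM 0 1))) hdinvA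
        (aux_vanish_sub m ((hfA 1).mul (hM 0 0)) ((hfA 0).mul (hM 0 1))
          (aux_vanish_mul m (hfA 1) (hM 0 0) (hv0 1))
          (aux_vanish_mul m (hfA 0) (hM 0 1) (hv0 0))) k hk
  · intro hg k hk
    have hg1 : ∀ k ≤ m, iteratedDeriv k g₁ s = 0 := fun k hk => (hg k hk).1
    have hg2 : ∀ k ≤ m, iteratedDeriv k g₂ s = 0 := fun k hk => (hg k hk).2
    have key : ∀ j, iteratedDeriv k (f j) s = 0 := by
      intro j
      have e : f j =ᶠ[𝓝 s] fun z => g₁ z * M 0 j z + g₂ z * M 1 j z :=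
        hrel.mono fun z hz => hz j
      rw [e.iteratedDeriv_eq k,
        aux_iteratedDeriv_add (f := fun z => g₁ z * M 0 j z) (g := fun z => g₂ z * M 1 j z)
          (hg₁.mul (hM 0 j)) (hg₂.mul (hM 1 j)),
        aux_vanish_mul m hg₁ (hM 0 j) hg1 k hk,
        aux_vanish_mul m hg₂ (hM 1 j) hg2 k hk, add_zero]
    exact ⟨key 0, key 1⟩
end

section
/- Let K be a field, let g₁, g₂ ∈ K[[T]] be formal power series, and let M be a 2×2 matrix with entries in K[[T]] such that the constant coefficient of det M is nonzero. Define (f₀, f₁) to be the row vector–matrix product (g₁, g₂)·M, i.e. f_j = g₁·(M 0 j) + g₂·(M 1 j). Then min(order of f₀, order of f₁) = min(order of g₁, order of g₂). -/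
open PowerSeries

private lemma min_order_le_combo {K : Type*} [Field K] (g₁ g₂ a b : PowerSeries K) :
    min g₁.order g₂.order ≤ (g₁ * a + g₂ * b).order := by
  refine le_trans ?_ (PowerSeries.min_order_le_order_add _ _)
  refine le_min (le_trans (min_le_left _ _) ?_) (le_trans (min_le_right _ _) ?_) <;>
    rw [PowerSeries.order_mul] <;> exact le_self_add

/-- Formal power series form of Lemma 5.2 / Corollary 5.3: the minimal order of a
pair of power series is unchanged under multiplication by a 2×2 matrix of power
series whose determinant has nonzero constant coefficient. -/
theorem min_order_eq_of_matrix_mul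
    {K : Type*} [Field K] (g₁ g₂ : PowerSeries K)
    (M : Matrix (Fin 2) (Fin 2) (PowerSeries K))
    (hdet : PowerSeries.constantCoeff M.det ≠ 0)
    (f : Fin 2 → PowerSeries K)
    (hf : ∀ j, f j = g₁ * M 0 j + g₂ * M 1 j) :
    min (f 0).order (f 1).order = min g₁.order g₂.order := by
  have hdet0 : M.det.order = 0 := by
    have := PowerSeries.order_le (φ := M.det) (n := 0)
      (by rwa [PowerSeries.coeff_zero_eq_constantCoeff_apply])
    exact le_antisymm (by simpa using this) zero_le
  have hge : min g₁.order g₂.order ≤ min (f 0).order (f 1).order := by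
    refine le_min ?_ ?_ <;> rw [hf] <;> exact min_order_le_combo _ _ _ _
  set A := M.adjugate with hA
  have key : ∀ i, g₁ * (M * A) 0 i + g₂ * (M * A) 1 i
      = f 0 * A 0 i + f 1 * A 1 i := by
    intro i
    simp only [hf, Matrix.mul_apply, Fin.sum_univ_two]
    ring
  have hle : min (f 0).order (f 1).order ≤ min g₁.order g₂.order := by
    refine le_min ?_ ?_
    · have h := key 0
      rw [Matrix.mul_adjugate] at h
      simp only [Matrix.smul_apply, Matrix.one_apply_eq, Matrix.one_apply_ne (by decide : (1:Fin 2) ≠ 0),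
        smul_eq_mul, mul_one, mul_zero, mul_comm] at h
      have : (g₁ * M.det).order = g₁.order := by
        rw [PowerSeries.order_mul, hdet0, add_zero]
      rw [← this]
      calc min (f 0).order (f 1).order ≤ (f 0 * A 0 0 + f 1 * A 1 0).order :=
            min_order_le_combo _ _ _ _
        _ = (g₁ * M.det).order := by rw [← h]; ring_nf
    · have h := key 1
      rw [Matrix.mul_adjugate] at h
      simp only [Matrix.smul_apply, Matrix.one_apply_eq, Matrix.one_apply_ne (by decide : (0:Fin 2) ≠ 1),
        smul_eq_mul, mul_one, mul_zero, mul_comm] at h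
      have : (g₂ * M.det).order = g₂.order := by
        rw [PowerSeries.order_mul, hdet0, add_zero]
      rw [← this]
      calc min (f 0).order (f 1).order ≤ (f 0 * A 0 1 + f 1 * A 1 1).order :=
            min_order_le_combo _ _ _ _
        _ = (g₂ * M.det).order := by rw [← h]; ring_nf
    
  exact le_antisymm hle hge
end

section
/- Let 𝕜 be a complete nontrivially normed field, s ∈ 𝕜, a ∈ 𝕜, and c ∈ 𝕜 with c ≠ 0. Let φ, g₁, g₂ : 𝕜 → 𝕜 be analytic at s with φ(s) = 0 and deriv φ s ≠ 0. Define f₁(z) = a·g₁(z) − φ(z)·g₂(z) and f₂(z) = c·g₁(z). Set d := min(ord_s f₁, ord_s f₂) and e := min(ord_s g₁, ord_s g₂), both in ℕ∞. Then d = e or d = e + 1. -/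
open Filter Topology

section Helpers

variable {𝕜 : Type*} [NontriviallyNormedField 𝕜] {s : 𝕜} {f g : 𝕜 → 𝕜}

/-- `n ≤ order` iff `f` factors as `(z-s)^n * h` with `h` analytic. -/
lemma AnalyticAt.natCast_le_order_iff (hf : AnalyticAt 𝕜 f s) (n : ℕ) :
    (n : ℕ∞) ≤ analyticOrderAt f s ↔
      ∃ h, AnalyticAt 𝕜 h s ∧ ∀ᶠ z in 𝓝 s, f z = (z - s) ^ n * h z := by
  constructor
  · intro hn
    rcases eq_or_ne (analyticOrderAt f s) ⊤ with h | h
    · refine ⟨fun _ => 0, analyticAt_const, ?_⟩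
      filter_upwards [analyticOrderAt_eq_top.mp h] with z hz
      simp [hz]
    · lift (analyticOrderAt f s) to ℕ using h with m hm
      have hnm : n ≤ m := by exact_mod_cast hn
      obtain ⟨u, hu, _, hequ⟩ := (hf.analyticOrderAt_eq_natCast (n := m)).mp hm.symm
      refine ⟨fun z => (z - s) ^ (m - n) * u z,
        (((analyticAt_id.sub analyticAt_const).pow _).mul hu), ?_⟩
      filter_upwards [hequ] with z hz
      rw [hz, smul_eq_mul, ← mul_assoc, ← pow_add, Nat.add_sub_cancel' hnm]
  · rintro ⟨h, hh, hfh⟩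
    rcases eq_or_ne (analyticOrderAt h s) ⊤ with ht | ht
    · have : analyticOrderAt f s = ⊤ := by
        rw [analyticOrderAt_eq_top]
        filter_upwards [hfh, analyticOrderAt_eq_top.mp ht] with z h1 h2
        simp [h1, h2]
      simp [this]
    · lift (analyticOrderAt h s) to ℕ using ht with k hk
      obtain ⟨u, hu, hu0, hequ⟩ := (hh.analyticOrderAt_eq_natCast (n := k)).mp hk.symm
      have hor : analyticOrderAt f s = ((n + k : ℕ) : ℕ∞) := by
        rw [hf.analyticOrderAt_eq_natCast]
        refine ⟨u, hu, hu0, ?_⟩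
        filter_upwards [hfh, hequ] with z h1 h2
        rw [h1, h2, smul_eq_mul, smul_eq_mul, ← mul_assoc, ← pow_add]
      rw [hor]
      exact_mod_cast Nat.le_add_right n k

/-- Multiplicativity of the order. -/
lemma AnalyticAt.order_mul' (hf : AnalyticAt 𝕜 f s) (hg : AnalyticAt 𝕜 g s)
    (hfg : AnalyticAt 𝕜 (fun z => f z * g z) s) :
    analyticOrderAt (fun z => f z * g z) s = analyticOrderAt f s + analyticOrderAt g s := by
  rcases eq_or_ne (analyticOrderAt f s) ⊤ with h | h
  · rw [h, top_add, analyticOrderAt_eq_top]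
    filter_upwards [analyticOrderAt_eq_top.mp h] with z hz
    simp [hz]
  rcases eq_or_ne (analyticOrderAt g s) ⊤ with h' | h'
  · rw [h', add_top, analyticOrderAt_eq_top]
    filter_upwards [analyticOrderAt_eq_top.mp h'] with z hz
    simp [hz]
  lift (analyticOrderAt f s) to ℕ using h with m hm
  lift (analyticOrderAt g s) to ℕ using h' with k hk
  obtain ⟨u, hu, hu0, hequ⟩ := (hf.analyticOrderAt_eq_natCast (n := m)).mp hm.symm
  obtain ⟨v, hv, hv0, heqv⟩ := (hg.analyticOrderAt_eq_natCast (n := k)).mp hk.symm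
  rw [← Nat.cast_add, hfg.analyticOrderAt_eq_natCast]
  refine ⟨fun z => u z * v z, hu.mul hv, mul_ne_zero hu0 hv0, ?_⟩
  filter_upwards [hequ, heqv] with z h1 h2
  rw [h1, h2, smul_eq_mul, smul_eq_mul, smul_eq_mul, pow_add]
  ring

/-- The order of a function eventually equal to a difference is at least the min
of the orders. -/
lemma AnalyticAt.min_order_le_order_sub (hf : AnalyticAt 𝕜 f s) (hg : AnalyticAt 𝕜 g s)
    {F : 𝕜 → 𝕜} (hF : AnalyticAt 𝕜 F s) (heq : ∀ z, F z = f z - g z) :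
    min (analyticOrderAt f s) (analyticOrderAt g s) ≤ analyticOrderAt F s := by
  rcases eq_or_ne (min (analyticOrderAt f s) (analyticOrderAt g s)) ⊤ with h | h
  · rw [min_eq_top] at h
    have : analyticOrderAt F s = ⊤ := by
      rw [analyticOrderAt_eq_top]
      filter_upwards [analyticOrderAt_eq_top.mp h.1, analyticOrderAt_eq_top.mp h.2] with z h1 h2
      rw [heq z, h1, h2, sub_zero]
    simp [this]
  · lift (min (analyticOrderAt f s) (analyticOrderAt g s)) to ℕ using h with n hn
    obtain ⟨u, hu, hequ⟩ := (hf.natCast_le_order_iff n).mp (hn.le.trans (min_le_left _ _))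
    obtain ⟨v, hv, heqv⟩ := (hg.natCast_le_order_iff n).mp (hn.le.trans (min_le_right _ _))
    rw [hF.natCast_le_order_iff n]
    refine ⟨fun z => u z - v z, hu.sub hv, ?_⟩
    filter_upwards [hequ, heqv] with z h1 h2
    rw [heq z, h1, h2, mul_sub]

end Helpers

/-- Lemma 5.4 (analytic version): for `f₁ = a·g₁ − φ·g₂` and `f₂ = c·g₁` with `φ`
having a simple zero at `s` and `c ≠ 0`, the minimal order of vanishing of
`(f₁, f₂)` at `s` equals that of `(g₁, g₂)` or that of `(g₁, g₂)` plus 1. -/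
theorem min_order_matrix_simple_zero
    {𝕜 : Type*} [NontriviallyNormedField 𝕜] [CompleteSpace 𝕜]
    {s a c : 𝕜} (hc : c ≠ 0) {φ g₁ g₂ : 𝕜 → 𝕜}
    (hφ : AnalyticAt 𝕜 φ s) (hφ₀ : φ s = 0) (hφ' : deriv φ s ≠ 0)
    (hg₁ : AnalyticAt 𝕜 g₁ s) (hg₂ : AnalyticAt 𝕜 g₂ s)
    (hf₁ : AnalyticAt 𝕜 (fun z => a * g₁ z - φ z * g₂ z) s)
    (hf₂ : AnalyticAt 𝕜 (fun z => c * g₁ z) s) :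
    min (analyticOrderAt (fun z => a * g₁ z - φ z * g₂ z) s) (analyticOrderAt (fun z => c * g₁ z) s) = min (analyticOrderAt g₁ s) (analyticOrderAt g₂ s) ∨
      min (analyticOrderAt (fun z => a * g₁ z - φ z * g₂ z) s) (analyticOrderAt (fun z => c * g₁ z) s) = min (analyticOrderAt g₁ s) (analyticOrderAt g₂ s) + 1 := by
  classical
  -- `φ` has order exactly 1 at `s`
  have hψ : AnalyticAt 𝕜 (dslope φ s) s := by
    obtain ⟨p, hp⟩ := hφ
    exact ⟨p.fslope, hp.has_fpower_series_dslope_fslope⟩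
  have hφord : analyticOrderAt φ s = 1 := by
    rw [show (1 : ℕ∞) = ((1 : ℕ) : ℕ∞) from rfl, hφ.analyticOrderAt_eq_natCast]
    refine ⟨dslope φ s, hψ, by rwa [dslope_same], ?_⟩
    filter_upwards with z
    rw [pow_one, smul_eq_mul, ← smul_eq_mul, sub_smul_dslope, hφ₀, sub_zero]
  -- order of `φ·g₂`
  have hφg₂ : AnalyticAt 𝕜 (fun z => φ z * g₂ z) s := hφ.mul hg₂
  have h2 : analyticOrderAt (fun z => φ z * g₂ z) s = 1 + analyticOrderAt g₂ s := by
    rw [hφ.order_mul' hg₂ hφg₂, hφord]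
  -- order of `a·g₁` is at least that of `g₁`
  have hag : AnalyticAt 𝕜 (fun z => a * g₁ z) s := analyticAt_const.mul hg₁
  have hagge : analyticOrderAt g₁ s ≤ analyticOrderAt (fun z => a * g₁ z) s := by
    rw [(analyticAt_const (v := a)).order_mul' hg₁ hag]
    exact self_le_add_left _ _
  -- order of `f₂` equals order of `g₁`
  have hcord : analyticOrderAt (fun _ => c : 𝕜 → 𝕜) s = 0 := by
    rw [show (0 : ℕ∞) = ((0 : ℕ) : ℕ∞) from rfl, (analyticAt_const (v := c) (x := s)).analyticOrderAt_eq_natCast]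
    exact ⟨fun _ => c, analyticAt_const, hc, by filter_upwards with z; simp⟩
  have hf₂ord : analyticOrderAt (fun z => c * g₁ z) s = analyticOrderAt g₁ s := by
    rw [(analyticAt_const (v := c)).order_mul' hg₁ hf₂, hcord, zero_add]
  -- key inequality (3): `ord f₁ ≥ min (ord g₁) (1 + ord g₂)`
  have h3 : min (analyticOrderAt g₁ s) (1 + analyticOrderAt g₂ s) ≤ analyticOrderAt (fun z => a * g₁ z - φ z * g₂ z) s := by
    refine le_trans (min_le_min hagge h2.ge) ?_
    exact hag.min_order_le_order_sub hφg₂ hf₁ (fun z => rfl)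
  -- key inequality (4): `1 + ord g₂ ≥ min (ord g₁) (ord f₁)`
  have h4 : min (analyticOrderAt g₁ s) (analyticOrderAt (fun z => a * g₁ z - φ z * g₂ z) s) ≤ 1 + analyticOrderAt g₂ s := by
    rw [← h2]
    refine le_trans (min_le_min hagge le_rfl) ?_
    exact hag.min_order_le_order_sub hf₁ hφg₂ (fun z => by ring)
  -- ENat arithmetic
  set x := analyticOrderAt (fun z => a * g₁ z - φ z * g₂ z) s
  set y := analyticOrderAt g₁ s
  set w := analyticOrderAt g₂ s
  rw [hf₂ord]
  rcases le_or_gt y w with hyw | hwy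
  · left
    have hy1w : y ≤ 1 + w := hyw.trans (self_le_add_left _ _)
    have hyx : y ≤ x := by
      rw [← min_eq_left hy1w]
      exact h3
    rw [min_eq_right hyx, min_eq_left hyw]
  · right
    have hwtop : w ≠ ⊤ := (hwy.trans_le le_top).ne
    have hw1y : w + 1 ≤ y := (ENat.add_one_le_iff hwtop).mpr hwy
    have h1w : (1 : ℕ∞) + w = w + 1 := add_comm 1 w
    have hx : 1 + w ≤ x := by
      have h1wy : (1 : ℕ∞) + w ≤ y := by rw [h1w]; exact hw1y
      rw [← min_eq_right h1wy]
      exact h3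
    have hub : min x y ≤ w + 1 := by
      rw [← h1w, min_comm]
      exact h4
    have hlb : w + 1 ≤ min x y := le_min (h1w ▸ hx) hw1y
    rw [min_eq_right hwy.le]
    exact le_antisymm hub hlb
end

section
/- Let K be a field, a, c ∈ K with c ≠ 0, and let φ ∈ K[[T]] be a formal power series of order exactly 1 (constant coefficient 0 and nonzero coefficient of T). For g₁, g₂ ∈ K[[T]] define f₁ := a·g₁ − φ·g₂ and f₂ := c·g₁. Set d := min(order of f₁, order of f₂) and e := min(order of g₁, order of g₂), both in ℕ∞. Then d = e or d = e + 1. -/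
open PowerSeries

private lemma order_neg' {K : Type*} [Field K] (f : PowerSeries K) :
    (-f).order = f.order := by
  have h : -f = (-1 : PowerSeries K) * f := by ring
  rw [h, PowerSeries.order_mul,
    PowerSeries.order_zero_of_unit (isUnit_one (M := PowerSeries K)).neg, zero_add]

private lemma order_C_mul {K : Type*} [Field K] {c : K} (hc : c ≠ 0)
    (g : PowerSeries K) : ((PowerSeries.C c) * g).order = g.order := by
  have h0 : (PowerSeries.C c).order = 0 := by
    have : (PowerSeries.C c).order = ((0 : ℕ) : ℕ∞) :=
      PowerSeries.order_eq_nat.mpr ⟨by simpa using hc, by omega⟩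
    simpa using this
  rw [PowerSeries.order_mul, h0, zero_add]

private lemma order_C_mul_ge {K : Type*} [Field K] (a : K)
    (g : PowerSeries K) : g.order ≤ ((PowerSeries.C a) * g).order := by
  rw [PowerSeries.order_mul]
  exact le_add_self

/-- Lemma 5.4 (formal power series version): for `f₁ = a·g₁ − φ·g₂` and
`f₂ = c·g₁` with `φ` of order exactly 1 and `c ≠ 0`, the minimal order of
`(f₁, f₂)` equals that of `(g₁, g₂)` or that of `(g₁, g₂)` plus 1. -/
theorem min_order_matrix_simple_zero_powerSeries
    {K : Type*} [Field K] (a c : K) (hc : c ≠ 0)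
    (φ : PowerSeries K) (hφ : φ.order = 1)
    (g₁ g₂ : PowerSeries K)
    (f₁ f₂ : PowerSeries K)
    (hf₁ : f₁ = (PowerSeries.C a) * g₁ - φ * g₂)
    (hf₂ : f₂ = (PowerSeries.C c) * g₁) :
    min f₁.order f₂.order = min g₁.order g₂.order ∨
      min f₁.order f₂.order = min g₁.order g₂.order + 1 := by
  have hf₂ord : f₂.order = g₁.order := by rw [hf₂, order_C_mul hc]
  have hφg₂ : (φ * g₂).order = 1 + g₂.order := by
    rw [PowerSeries.order_mul, hφ]
  have hCa : g₁.order ≤ ((PowerSeries.C a) * g₁).order := order_C_mul_ge a g₁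
  have hf₁' : f₁ = (PowerSeries.C a) * g₁ + (-(φ * g₂)) := by rw [hf₁]; ring
  have hf₁ge : min ((PowerSeries.C a) * g₁).order (1 + g₂.order) ≤ f₁.order := by
    rw [hf₁']
    have := PowerSeries.min_order_le_order_add ((PowerSeries.C a) * g₁) (-(φ * g₂))
    rwa [order_neg', hφg₂] at this
  rcases le_or_gt g₁.order g₂.order with h | h
  · left
    have hmin : min g₁.order g₂.order = g₁.order := min_eq_left h
    rw [hmin]
    apply le_antisymm
    · exact le_trans (min_le_right _ _) (le_of_eq hf₂ord)
    · refine le_min ?_ (le_of_eq hf₂ord.symm)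
      refine le_trans ?_ hf₁ge
      refine le_min hCa (le_trans h ?_)
      exact le_add_self
  · right
    have hg₂top : g₂.order ≠ ⊤ := ne_top_of_lt h
    have h1 : g₂.order + 1 ≤ g₁.order := (ENat.add_one_le_iff hg₂top).mpr h
    have hmin : min g₁.order g₂.order = g₂.order := min_eq_right h.le
    rw [hmin]
    have hcomm : (1 : ℕ∞) + g₂.order = g₂.order + 1 := add_comm _ _
    apply le_antisymm
    · -- d ≤ e + 1
      rcases eq_or_lt_of_le h1 with heq | hlt
      · exact le_trans (min_le_right _ _) (by rw [hf₂ord, ← heq])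
      · -- g₂.order + 1 < g₁.order, so f₁.order = g₂.order + 1
        have hne : ((PowerSeries.C a) * g₁).order ≠ (-(φ * g₂)).order := by
          rw [order_neg', hφg₂, hcomm]
          exact (lt_of_lt_of_le hlt hCa).ne'
        have hf₁eq : f₁.order = g₂.order + 1 := by
          rw [hf₁', PowerSeries.order_add_of_order_ne _ _ hne, order_neg', hφg₂, hcomm]
          exact min_eq_right (le_trans hlt.le hCa)
        exact le_trans (min_le_left _ _) (le_of_eq hf₁eq)
    · -- e + 1 ≤ d
      refine le_min ?_ (by rw [hf₂ord]; exact h1)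
      refine le_trans ?_ hf₁ge
      rw [hcomm]
      exact le_min (h1.trans hCa) le_rfl
end
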